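/- If π is a uniformly random permutation of [n] independent of independent Bernoulli random variables X_{j,r} with success probabilities p_{j,r}, and S_n = Σ_{j=1}^n X_{j,π(j)}, then Var(S_n) = λ − Σ_{j=1}^n (p̄_{j,·})² − γ, where λ = ES_n = (1/n) Σ_{j,r} p_{j,r}, p̄_{j,·} = (1/n) Σ_r p_{j,r}, and γ = (1/(2n²(n-1))) Σ_{(j,k) distinct} Σ_{(r,s) distinct} (p_{j,r}-p_{j,s})(p_{k,r}-p_{k,s}). -/

import Mathlib

open Finset Real

/-- Probability weight of an outcome `x` of the Bernoulli matrix `(X_{j,r})` with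
success probabilities `p`, the entries being independent. -/
noncomputable def bw (n : ℕ) (p : Fin n → Fin n → ℝ) (x : Fin n → Fin n → Bool) : ℝ :=
  ∏ j : Fin n, ∏ r : Fin n, if x j r then p j r else 1 - p j r

/-- Expectation of `f (X, π)` where the Bernoulli matrix `X` (independent entries with
success probabilities `p`) and the uniformly distributed random permutation `π` are
independent. -/
noncomputable def dExp (n : ℕ) (p : Fin n → Fin n → ℝ)
    (f : (Fin n → Fin n → Bool) → Equiv.Perm (Fin n) → ℝ) : ℝ :=
  ((n.factorial : ℝ))⁻¹ *
    ∑ σ : Equiv.Perm (Fin n), ∑ x : Fin n → Fin n → Bool, bw n p x * f x σ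

/-- The random diagonal sum `S_n = ∑ j, X_{j,π(j)}` as a function of the outcome. -/
noncomputable def dSum (n : ℕ) (x : Fin n → Fin n → Bool) (σ : Equiv.Perm (Fin n)) : ℝ :=
  ∑ j : Fin n, if x j (σ j) then (1:ℝ) else 0

/-- The variance of the random diagonal sum `S_n`. -/
noncomputable def dVar (n : ℕ) (p : Fin n → Fin n → ℝ) : ℝ :=
  dExp n p (fun x σ => (dSum n x σ)^2) - (dExp n p (dSum n))^2

section Aux

lemma sum_pi_bool {I : Type*} [Fintype I] [DecidableEq I] (w : I → Bool → ℝ)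
    (hw : ∀ i, w i true + w i false = 1) (S : Finset I) :
    ∑ y : I → Bool, (∏ i, w i (y i)) * ∏ i ∈ S, (if y i then (1:ℝ) else 0)
      = ∏ i ∈ S, w i true := by
  have h1 : ∀ y : I → Bool, (∏ i, w i (y i)) * ∏ i ∈ S, (if y i then (1:ℝ) else 0)
      = ∏ i, (w i (y i) * (if i ∈ S then (if y i then (1:ℝ) else 0) else 1)) := by
    intro y
    rw [Finset.prod_mul_distrib, Fintype.prod_ite_mem]
  simp_rw [h1]
  rw [← Fintype.prod_sum (fun i b => w i b * (if i ∈ S then (if b then (1:ℝ) else 0) else 1))]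
  rw [← Fintype.prod_ite_mem S (fun i => w i true)]
  refine Finset.prod_congr rfl fun i _ => ?_
  rw [Fintype.sum_bool]
  by_cases h : i ∈ S <;> simp [h, hw i]

lemma bw_marginal (n : ℕ) (p : Fin n → Fin n → ℝ) (S : Finset (Fin n × Fin n)) :
    ∑ x : Fin n → Fin n → Bool, bw n p x * ∏ q ∈ S, (if x q.1 q.2 then (1:ℝ) else 0)
      = ∏ q ∈ S, p q.1 q.2 := by
  have key := sum_pi_bool (fun q : Fin n × Fin n => fun b => if b then p q.1 q.2 else 1 - p q.1 q.2)
    (fun i => by simp) S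
  simp only [if_true] at key
  rw [← key]
  refine Fintype.sum_equiv (Equiv.curry (Fin n) (Fin n) Bool).symm _ _ fun x => ?_
  congr 1
  rw [bw, Fintype.prod_prod_type]
  rfl

lemma bw_ind (n : ℕ) (p : Fin n → Fin n → ℝ) (j r : Fin n) :
    ∑ x : Fin n → Fin n → Bool, bw n p x * (if x j r then (1:ℝ) else 0) = p j r := by
  simpa using bw_marginal n p {(j, r)}

lemma bw_ind2 (n : ℕ) (p : Fin n → Fin n → ℝ) {j r k s : Fin n}
    (h : (j, r) ≠ (k, s)) :
    ∑ x : Fin n → Fin n → Bool,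
      bw n p x * ((if x j r then (1:ℝ) else 0) * (if x k s then (1:ℝ) else 0))
      = p j r * p k s := by
  have key := bw_marginal n p {(j, r), (k, s)}
  simp only [Finset.prod_pair h] at key
  exact key

lemma exists_perm_map {α : Type*} [DecidableEq α] {a b c d : α} (hab : a ≠ b) (hcd : c ≠ d) :
    ∃ τ : Equiv.Perm α, τ a = c ∧ τ b = d := by
  refine ⟨(Equiv.swap (Equiv.swap a c b) d) * Equiv.swap a c, ?_, ?_⟩ <;>
  · simp only [Equiv.Perm.mul_apply, Equiv.swap_apply_def]
    split_ifs <;> simp_all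

lemma fiber1_card (n : ℕ) (j : Fin n) (r r' : Fin n) :
    (univ.filter fun σ : Equiv.Perm (Fin n) => σ j = r).card
      = (univ.filter fun σ : Equiv.Perm (Fin n) => σ j = r').card := by
  apply Finset.card_nbij' (fun σ => Equiv.swap r r' * σ) (fun σ => Equiv.swap r r' * σ)
  · intro σ hσ
    simp only [mem_coe, mem_filter, mem_univ, true_and] at *
    rw [Equiv.Perm.mul_apply, hσ, Equiv.swap_apply_left]
  · intro σ hσ
    simp only [mem_coe, mem_filter, mem_univ, true_and] at *
    rw [Equiv.Perm.mul_apply, hσ, Equiv.swap_apply_right]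
  · intro σ _; simp [← mul_assoc]
  · intro σ _; simp [← mul_assoc]

lemma sum_perm_apply (n : ℕ) (j : Fin n) (f : Fin n → ℝ) :
    (n : ℝ) * ∑ σ : Equiv.Perm (Fin n), f (σ j)
      = (n.factorial : ℝ) * ∑ r : Fin n, f r := by
  rcases Nat.eq_zero_or_pos n with h | h
  · subst h; simp
  have hfib : ∑ σ : Equiv.Perm (Fin n), f (σ j)
      = ∑ r : Fin n, ((univ.filter fun σ : Equiv.Perm (Fin n) => σ j = r).card : ℝ) * f r := by
    rw [← Finset.sum_fiberwise_of_maps_to (g := fun σ : Equiv.Perm (Fin n) => σ j)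
      (fun σ _ => mem_univ _) (fun σ => f (σ j))]
    refine Finset.sum_congr rfl fun r _ => ?_
    rw [Finset.sum_congr rfl (fun σ hσ => by
      rw [(Finset.mem_filter.mp hσ).2]), Finset.sum_const, nsmul_eq_mul]
  set r0 : Fin n := ⟨0, h⟩
  set c : ℕ := (univ.filter fun σ : Equiv.Perm (Fin n) => σ j = r0).card with hc
  have hall : ∀ r, (univ.filter fun σ : Equiv.Perm (Fin n) => σ j = r).card = c :=
    fun r => fiber1_card n j r r0
  have htot : n * c = n.factorial := by
    have := Finset.card_eq_sum_card_fiberwise (f := fun σ : Equiv.Perm (Fin n) => σ j)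
      (s := univ) (t := univ) (fun σ _ => mem_univ _)
    simp only [hall, sum_const, card_univ, smul_eq_mul, Fintype.card_perm, Fintype.card_fin] at this
    omega
  rw [hfib]
  simp only [hall]
  rw [← Finset.mul_sum, ← mul_assoc, ← Nat.cast_mul, htot]

lemma fiber2_card (n : ℕ) (j k : Fin n) {r s r' s' : Fin n} (hrs : r ≠ s) (hrs' : r' ≠ s') :
    (univ.filter fun σ : Equiv.Perm (Fin n) => σ j = r ∧ σ k = s).card
      = (univ.filter fun σ : Equiv.Perm (Fin n) => σ j = r' ∧ σ k = s').card := by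
  obtain ⟨τ, hτr, hτs⟩ := exists_perm_map hrs hrs'
  apply Finset.card_nbij' (fun σ => τ * σ) (fun σ => τ⁻¹ * σ)
  · intro σ hσ
    simp only [mem_coe, mem_filter, mem_univ, true_and, Equiv.Perm.mul_apply] at *
    rw [hσ.1, hσ.2]; exact ⟨hτr, hτs⟩
  · intro σ hσ
    simp only [mem_coe, mem_filter, mem_univ, true_and, Equiv.Perm.mul_apply] at *
    rw [hσ.1, hσ.2, ← hτr, ← hτs]; simp
  · intro σ _; simp [← mul_assoc]
  · intro σ _; simp [← mul_assoc]

lemma fiber2_diag (n : ℕ) {j k : Fin n} (hjk : j ≠ k) (r : Fin n) :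
    (univ.filter fun σ : Equiv.Perm (Fin n) => σ j = r ∧ σ k = r) = ∅ := by
  ext σ
  simp only [mem_filter, mem_univ, true_and, notMem_empty, iff_false, not_and]
  intro h1 h2
  exact hjk (σ.injective (h1.trans h2.symm))

set_option maxRecDepth 4000 in
lemma sum_perm_apply2 (n : ℕ) (hn : 2 ≤ n) {j k : Fin n} (hjk : j ≠ k) (g : Fin n → Fin n → ℝ) :
    ((n:ℝ) * ((n:ℝ) - 1)) * ∑ σ : Equiv.Perm (Fin n), g (σ j) (σ k)
      = (n.factorial : ℝ) * ∑ r : Fin n, ∑ s : Fin n, if r ≠ s then g r s else 0 := by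
  set r0 : Fin n := ⟨0, by omega⟩
  set s0 : Fin n := ⟨1, by omega⟩
  have hr0s0 : r0 ≠ s0 := by simp [r0, s0, Fin.ext_iff]
  set d : ℕ := (univ.filter fun σ : Equiv.Perm (Fin n) => σ j = r0 ∧ σ k = s0).card with hd
  have hcard : ∀ r s : Fin n,
      ((univ.filter fun σ : Equiv.Perm (Fin n) => σ j = r ∧ σ k = s).card : ℝ)
        = if r ≠ s then (d:ℝ) else 0 := by
    intro r s
    by_cases h : r = s
    · subst h; rw [fiber2_diag n hjk]; simp
    · rw [fiber2_card n j k h hr0s0]; simp [h]; exact hd.symm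
  have hfib : ∑ σ : Equiv.Perm (Fin n), g (σ j) (σ k)
      = ∑ rs : Fin n × Fin n,
          ((univ.filter fun σ : Equiv.Perm (Fin n) => σ j = rs.1 ∧ σ k = rs.2).card : ℝ)
            * g rs.1 rs.2 := by
    rw [← Finset.sum_fiberwise_of_maps_to (g := fun σ : Equiv.Perm (Fin n) => (σ j, σ k))
      (fun σ _ => mem_univ _) (fun σ => g (σ j) (σ k))]
    refine Finset.sum_congr rfl fun rs _ => ?_
    have hset : (univ.filter fun σ : Equiv.Perm (Fin n) => (σ j, σ k) = rs)
        = (univ.filter fun σ : Equiv.Perm (Fin n) => σ j = rs.1 ∧ σ k = rs.2) := by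
      ext σ; simp [Prod.ext_iff]
    rw [Finset.sum_congr rfl (fun σ hσ => by
      obtain ⟨-, h2⟩ := Finset.mem_filter.mp hσ
      rw [show σ j = rs.1 from congrArg Prod.fst h2, show σ k = rs.2 from congrArg Prod.snd h2]),
      Finset.sum_const, nsmul_eq_mul, hset]
  have htot : ((n:ℝ) * ((n:ℝ) - 1)) * d = n.factorial := by
    have h1 := Finset.card_eq_sum_card_fiberwise
      (f := fun σ : Equiv.Perm (Fin n) => (σ j, σ k)) (s := univ) (t := univ)
      (fun σ _ => mem_univ _)
    have h2 : (((Finset.univ : Finset (Equiv.Perm (Fin n))).card : ℕ) : ℝ)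
        = ∑ rs : Fin n × Fin n,
        ((univ.filter fun σ : Equiv.Perm (Fin n) => σ j = rs.1 ∧ σ k = rs.2).card : ℝ) := by
      rw [h1]; push_cast
      refine Finset.sum_congr rfl fun rs _ => ?_
      have hset : (univ.filter fun σ : Equiv.Perm (Fin n) => (σ j, σ k) = rs)
          = (univ.filter fun σ : Equiv.Perm (Fin n) => σ j = rs.1 ∧ σ k = rs.2) := by
        ext σ; simp [Prod.ext_iff]
      rw [hset]
    rw [Finset.sum_congr rfl (fun rs _ => hcard rs.1 rs.2), card_univ, Fintype.card_perm,
      Fintype.card_fin, Fintype.sum_prod_type] at h2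
    have h3 : ∀ r : Fin n, ∑ s : Fin n, (if r ≠ s then (d:ℝ) else 0)
        = (n:ℝ) * d - d := by
      intro r
      have : ∀ s : Fin n, (if r ≠ s then (d:ℝ) else 0) = d - (if r = s then (d:ℝ) else 0) := by
        intro s; by_cases h : r = s <;> simp [h]
      simp_rw [this, Finset.sum_sub_distrib, Finset.sum_const, Finset.sum_ite_eq,
        mem_univ, if_true, card_univ, Fintype.card_fin, nsmul_eq_mul]
    rw [Finset.sum_congr rfl (fun r _ => h3 r), Finset.sum_const, card_univ,
      Fintype.card_fin, nsmul_eq_mul] at h2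
    rw [h2]; ring
  rw [hfib, Finset.sum_congr rfl (fun (rs : Fin n × Fin n) _ => by rw [hcard rs.1 rs.2] :
    ∀ rs ∈ (univ : Finset (Fin n × Fin n)), _ = (if rs.1 ≠ rs.2 then (d:ℝ) else 0) * g rs.1 rs.2),
    Fintype.sum_prod_type]
  have : ∀ r s : Fin n, (if r ≠ s then (d:ℝ) else 0) * g r s
      = (d:ℝ) * (if r ≠ s then g r s else 0) := by
    intro r s; by_cases h : r = s <;> simp [h]
  simp_rw [this, ← Finset.mul_sum]
  rw [← mul_assoc, htot]

lemma exp_dSum_sigma (n : ℕ) (p : Fin n → Fin n → ℝ) (σ : Equiv.Perm (Fin n)) :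
    ∑ x : Fin n → Fin n → Bool, bw n p x * dSum n x σ = ∑ j : Fin n, p j (σ j) := by
  simp_rw [dSum, Finset.mul_sum]
  rw [Finset.sum_comm]
  exact Finset.sum_congr rfl fun j _ => bw_ind n p j (σ j)

set_option maxHeartbeats 2000000 in
lemma exp_dSum_sq_sigma (n : ℕ) (p : Fin n → Fin n → ℝ) (σ : Equiv.Perm (Fin n)) :
    ∑ x : Fin n → Fin n → Bool, bw n p x * (dSum n x σ)^2
      = (∑ j : Fin n, p j (σ j))
        + ∑ j : Fin n, ∑ k : Fin n, (if j ≠ k then p j (σ j) * p k (σ k) else 0) := by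
  have step1 : ∑ x : Fin n → Fin n → Bool, bw n p x * (dSum n x σ)^2
      = ∑ j : Fin n, ∑ k : Fin n,
          (if j = k then p j (σ j) else p j (σ j) * p k (σ k)) := by
    simp_rw [dSum, sq, Fintype.sum_mul_sum, Finset.mul_sum]
    rw [Finset.sum_comm]
    refine Finset.sum_congr rfl fun j _ => ?_
    rw [Finset.sum_comm]
    refine Finset.sum_congr rfl fun k _ => ?_
    by_cases h : j = k
    · subst h
      rw [if_pos rfl]
      have hsq : ∀ x : Fin n → Fin n → Bool,
          (if x j (σ j) then (1:ℝ) else 0) * (if x j (σ j) then (1:ℝ) else 0)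
            = (if x j (σ j) then (1:ℝ) else 0) := by
        intro x; by_cases hx : x j (σ j) <;> simp [hx]
      simp_rw [hsq]
      exact bw_ind n p j (σ j)
    · rw [if_neg h]
      exact bw_ind2 n p (fun hh => h (congrArg Prod.fst hh))
  rw [step1]
  have hpt : ∀ j k : Fin n, (if j = k then p j (σ j) else p j (σ j) * p k (σ k))
      = (if j = k then p j (σ j) else 0) + (if j ≠ k then p j (σ j) * p k (σ k) else 0) := by
    intro j k; by_cases h : j = k <;> simp [h]
  simp_rw [hpt, Finset.sum_add_distrib]
  congr 1
  refine Finset.sum_congr rfl fun j _ => ?_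
  rw [Finset.sum_ite_eq]
  simp

set_option maxHeartbeats 1600000 in
lemma expand4 (n : ℕ) (X : Fin n → Fin n → Fin n → Fin n → ℝ) :
    ∑ j : Fin n, ∑ k : Fin n, ∑ r : Fin n, ∑ s : Fin n,
        (if j ≠ k ∧ r ≠ s then X j k r s else 0)
      = (∑ j : Fin n, ∑ k : Fin n, ∑ r : Fin n, ∑ s : Fin n, X j k r s)
        - (∑ j : Fin n, ∑ r : Fin n, ∑ s : Fin n, X j j r s)
        - (∑ j : Fin n, ∑ k : Fin n, ∑ r : Fin n, X j k r r)
        + (∑ j : Fin n, ∑ r : Fin n, X j j r r) := by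
  have point : ∀ j k r s, (if j ≠ k ∧ r ≠ s then X j k r s else 0)
      = X j k r s - (if j = k then X j k r s else 0) - (if r = s then X j k r s else 0)
        + (if j = k ∧ r = s then X j k r s else 0) := by
    intro j k r s
    by_cases h1 : j = k <;> by_cases h2 : r = s <;> simp [h1, h2] <;> ring
  have e1 : ∑ j : Fin n, ∑ k : Fin n, ∑ r : Fin n, ∑ s : Fin n,
      (if j = k then X j k r s else 0) = ∑ j : Fin n, ∑ r : Fin n, ∑ s : Fin n, X j j r s := by
    refine Finset.sum_congr rfl fun j _ => ?_
    have hpull : ∀ k : Fin n, ∑ r : Fin n, ∑ s : Fin n, (if j = k then X j k r s else 0)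
        = (if j = k then ∑ r : Fin n, ∑ s : Fin n, X j k r s else 0) := by
      intro k; by_cases h : j = k <;> simp [h]
    simp_rw [hpull]
    rw [Finset.sum_ite_eq]
    simp
  have e2 : ∑ j : Fin n, ∑ k : Fin n, ∑ r : Fin n, ∑ s : Fin n,
      (if r = s then X j k r s else 0) = ∑ j : Fin n, ∑ k : Fin n, ∑ r : Fin n, X j k r r := by
    refine Finset.sum_congr rfl fun j _ => Finset.sum_congr rfl fun k _ =>
      Finset.sum_congr rfl fun r _ => ?_
    rw [Finset.sum_ite_eq]
    simp
  have e3 : ∑ j : Fin n, ∑ k : Fin n, ∑ r : Fin n, ∑ s : Fin n,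
      (if j = k ∧ r = s then X j k r s else 0) = ∑ j : Fin n, ∑ r : Fin n, X j j r r := by
    have hpt : ∀ j k r s : Fin n, (if j = k ∧ r = s then X j k r s else 0)
        = (if j = k then (if r = s then X j k r s else 0) else 0) := by
      intro j k r s
      by_cases h1 : j = k <;> by_cases h2 : r = s <;> simp [h1, h2]
    simp_rw [hpt]
    refine Finset.sum_congr rfl fun j _ => ?_
    have hpull : ∀ k : Fin n, ∑ r : Fin n, ∑ s : Fin n,
        (if j = k then (if r = s then X j k r s else 0) else 0)
        = (if j = k then ∑ r : Fin n, ∑ s : Fin n, (if r = s then X j k r s else 0) else 0) := by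
      intro k; by_cases h : j = k <;> simp [h]
    simp_rw [hpull]
    rw [Finset.sum_ite_eq]
    simp only [mem_univ, if_true]
    refine Finset.sum_congr rfl fun r _ => ?_
    rw [Finset.sum_ite_eq]
    simp
  calc ∑ j : Fin n, ∑ k : Fin n, ∑ r : Fin n, ∑ s : Fin n,
        (if j ≠ k ∧ r ≠ s then X j k r s else 0)
      = ∑ j : Fin n, ∑ k : Fin n, ∑ r : Fin n, ∑ s : Fin n,
        (X j k r s - (if j = k then X j k r s else 0) - (if r = s then X j k r s else 0)
          + (if j = k ∧ r = s then X j k r s else 0)) := by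
        exact Finset.sum_congr rfl fun j _ => Finset.sum_congr rfl fun k _ =>
          Finset.sum_congr rfl fun r _ => Finset.sum_congr rfl fun s _ => point j k r s
    _ = (∑ j : Fin n, ∑ k : Fin n, ∑ r : Fin n, ∑ s : Fin n, X j k r s)
        - (∑ j : Fin n, ∑ k : Fin n, ∑ r : Fin n, ∑ s : Fin n, (if j = k then X j k r s else 0))
        - (∑ j : Fin n, ∑ k : Fin n, ∑ r : Fin n, ∑ s : Fin n, (if r = s then X j k r s else 0))
        + (∑ j : Fin n, ∑ k : Fin n, ∑ r : Fin n, ∑ s : Fin n,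
            (if j = k ∧ r = s then X j k r s else 0)) := by
        simp_rw [Finset.sum_add_distrib, Finset.sum_sub_distrib]
    _ = _ := by rw [e1, e2, e3]

lemma L1 (n : ℕ) (p : Fin n → Fin n → ℝ) :
    ∑ j : Fin n, ∑ k : Fin n, ∑ r : Fin n, ∑ s : Fin n, p j r * p k s
      = (∑ j : Fin n, ∑ r : Fin n, p j r)^2 := by
  rw [sq, Fintype.sum_mul_sum]
  exact Finset.sum_congr rfl fun j _ => Finset.sum_congr rfl fun k _ =>
    (Fintype.sum_mul_sum _ _).symm

lemma L2 (n : ℕ) (p : Fin n → Fin n → ℝ) :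
    ∑ j : Fin n, ∑ r : Fin n, ∑ s : Fin n, p j r * p j s
      = ∑ j : Fin n, (∑ r : Fin n, p j r)^2 := by
  refine Finset.sum_congr rfl fun j _ => ?_
  rw [sq, Fintype.sum_mul_sum]

lemma Gt (n : ℕ) (p : Fin n → Fin n → ℝ) :
    ∑ j : Fin n, ∑ k : Fin n, ∑ r : Fin n, ∑ s : Fin n,
        (p j r - p j s) * (p k r - p k s)
      = 2 * (n:ℝ) * (∑ j : Fin n, ∑ k : Fin n, ∑ r : Fin n, p j r * p k r)
        - 2 * (∑ j : Fin n, ∑ r : Fin n, p j r)^2 := by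
  have expand_prod : ∀ j k r s : Fin n, (p j r - p j s) * (p k r - p k s)
      = p j r * p k r - p j r * p k s - p j s * p k r + p j s * p k s := fun _ _ _ _ => by ring
  simp_rw [expand_prod, Finset.sum_add_distrib, Finset.sum_sub_distrib]
  have hQ1 : ∑ j : Fin n, ∑ k : Fin n, ∑ r : Fin n, ∑ s : Fin n, p j r * p k r
      = (n:ℝ) * ∑ j : Fin n, ∑ k : Fin n, ∑ r : Fin n, p j r * p k r := by
    simp_rw [Finset.sum_const, card_univ, Fintype.card_fin, nsmul_eq_mul, ← Finset.mul_sum]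
  have hQ3 : ∑ j : Fin n, ∑ k : Fin n, ∑ r : Fin n, ∑ s : Fin n, p j s * p k r
      = ∑ j : Fin n, ∑ k : Fin n, ∑ r : Fin n, ∑ s : Fin n, p j r * p k s :=
    Finset.sum_congr rfl fun j _ => Finset.sum_congr rfl fun k _ => Finset.sum_comm
  have hQ4 : ∑ j : Fin n, ∑ k : Fin n, ∑ r : Fin n, ∑ s : Fin n, p j s * p k s
      = (n:ℝ) * ∑ j : Fin n, ∑ k : Fin n, ∑ s : Fin n, p j s * p k s := by
    simp_rw [Finset.sum_const, card_univ, Fintype.card_fin, nsmul_eq_mul, ← Finset.mul_sum]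
  rw [hQ1, hQ3, hQ4, L1]
  ring

lemma Gd1 (n : ℕ) (p : Fin n → Fin n → ℝ) :
    ∑ j : Fin n, ∑ r : Fin n, ∑ s : Fin n, (p j r - p j s) * (p j r - p j s)
      = 2 * (n:ℝ) * (∑ j : Fin n, ∑ r : Fin n, p j r * p j r)
        - 2 * ∑ j : Fin n, (∑ r : Fin n, p j r)^2 := by
  have expand_prod : ∀ j r s : Fin n, (p j r - p j s) * (p j r - p j s)
      = p j r * p j r - p j r * p j s - p j s * p j r + p j s * p j s := fun _ _ _ => by ring
  simp_rw [expand_prod, Finset.sum_add_distrib, Finset.sum_sub_distrib]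
  have h1 : ∑ j : Fin n, ∑ r : Fin n, ∑ s : Fin n, p j r * p j r
      = (n:ℝ) * ∑ j : Fin n, ∑ r : Fin n, p j r * p j r := by
    simp_rw [Finset.sum_const, card_univ, Fintype.card_fin, nsmul_eq_mul, ← Finset.mul_sum]
  have h3 : ∑ j : Fin n, ∑ r : Fin n, ∑ s : Fin n, p j s * p j r
      = ∑ j : Fin n, ∑ r : Fin n, ∑ s : Fin n, p j r * p j s :=
    Finset.sum_congr rfl fun j _ => Finset.sum_comm
  have h4 : ∑ j : Fin n, ∑ r : Fin n, ∑ s : Fin n, p j s * p j s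
      = (n:ℝ) * ∑ j : Fin n, ∑ s : Fin n, p j s * p j s := by
    simp_rw [Finset.sum_const, card_univ, Fintype.card_fin, nsmul_eq_mul, ← Finset.mul_sum]
  rw [h1, h3, h4, L2]
  ring

lemma hE1 (n : ℕ) (hn : n ≠ 0) (p : Fin n → Fin n → ℝ) :
    ((n.factorial : ℝ))⁻¹ * ∑ σ : Equiv.Perm (Fin n), ∑ j : Fin n, p j (σ j)
      = (n:ℝ)⁻¹ * ∑ j : Fin n, ∑ r : Fin n, p j r := by
  have hn0 : (n:ℝ) ≠ 0 := Nat.cast_ne_zero.mpr hn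
  have hfac0 : (n.factorial : ℝ) ≠ 0 := Nat.cast_ne_zero.mpr (Nat.factorial_ne_zero n)
  rw [Finset.sum_comm]
  have hj : ∀ j : Fin n, ∑ σ : Equiv.Perm (Fin n), p j (σ j)
      = (n.factorial : ℝ) * ((n:ℝ)⁻¹ * ∑ r : Fin n, p j r) := by
    intro j
    have h := sum_perm_apply n j (p j)
    rw [show (n.factorial:ℝ) * ((n:ℝ)⁻¹ * ∑ r : Fin n, p j r)
        = (n:ℝ)⁻¹ * ((n.factorial:ℝ) * ∑ r : Fin n, p j r) by ring, ← h, ← mul_assoc,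
      inv_mul_cancel₀ hn0, one_mul]
  rw [Finset.sum_congr rfl fun j _ => hj j, ← Finset.mul_sum, ← mul_assoc,
    inv_mul_cancel₀ hfac0, one_mul, Finset.mul_sum]

end Aux

set_option maxHeartbeats 1600000 in
theorem var_diag_sum (n : ℕ) (hn : 2 ≤ n) (p : Fin n → Fin n → ℝ)
    (hp : ∀ j r, p j r ∈ Set.Icc (0:ℝ) 1) :
    dExp n p (dSum n) = (n:ℝ)⁻¹ * ∑ j : Fin n, ∑ r : Fin n, p j r ∧
    dVar n p
      = (n:ℝ)⁻¹ * (∑ j : Fin n, ∑ r : Fin n, p j r)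
        - ∑ j : Fin n, ((n:ℝ)⁻¹ * ∑ r : Fin n, p j r)^2
        - (1 / (2 * (n:ℝ)^2 * ((n:ℝ) - 1))) *
            ∑ j : Fin n, ∑ k : Fin n, ∑ r : Fin n, ∑ s : Fin n,
              (if j ≠ k ∧ r ≠ s then (p j r - p j s) * (p k r - p k s) else 0) := by
  have hn2 : (2:ℝ) ≤ (n:ℝ) := by exact_mod_cast hn
  have hn0 : (n:ℝ) ≠ 0 := by linarith
  have hn1 : (n:ℝ) - 1 ≠ 0 := by linarith
  have hc0 : (n:ℝ) * ((n:ℝ) - 1) ≠ 0 := mul_ne_zero hn0 hn1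
  have hfac0 : (n.factorial : ℝ) ≠ 0 := Nat.cast_ne_zero.mpr (Nat.factorial_ne_zero n)
  have hE : dExp n p (dSum n) = (n:ℝ)⁻¹ * ∑ j : Fin n, ∑ r : Fin n, p j r := by
    rw [dExp, Finset.sum_congr rfl fun σ _ => exp_dSum_sigma n p σ]
    exact hE1 n (by omega) p
  refine ⟨hE, ?_⟩
  have hclaim : ∀ j k : Fin n, ∑ σ : Equiv.Perm (Fin n),
      (if j ≠ k then p j (σ j) * p k (σ k) else 0)
      = (n.factorial : ℝ) * (((n:ℝ) * ((n:ℝ) - 1))⁻¹ *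
          ∑ r : Fin n, ∑ s : Fin n, (if j ≠ k ∧ r ≠ s then p j r * p k s else 0)) := by
    intro j k
    by_cases h : j = k
    · simp [h]
    · have h2 := sum_perm_apply2 n hn h (fun r s => p j r * p k s)
      have hite : ∀ r s : Fin n, (if j ≠ k ∧ r ≠ s then p j r * p k s else 0)
          = (if r ≠ s then p j r * p k s else 0) := by intro r s; simp [h]
      rw [Finset.sum_congr rfl fun σ _ => if_pos h]
      rw [show ∑ σ : Equiv.Perm (Fin n), p j (σ j) * p k (σ k)
          = ((n:ℝ) * ((n:ℝ) - 1))⁻¹ *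
            (((n:ℝ) * ((n:ℝ) - 1)) * ∑ σ : Equiv.Perm (Fin n), p j (σ j) * p k (σ k)) by
        rw [← mul_assoc, inv_mul_cancel₀ hc0, one_mul], h2]
      simp_rw [hite]
      ring
  have hE2 : dExp n p (fun x σ => (dSum n x σ)^2)
      = (n:ℝ)⁻¹ * (∑ j : Fin n, ∑ r : Fin n, p j r)
        + ((n:ℝ) * ((n:ℝ) - 1))⁻¹ * ∑ j : Fin n, ∑ k : Fin n, ∑ r : Fin n, ∑ s : Fin n,
            (if j ≠ k ∧ r ≠ s then p j r * p k s else 0) := by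
    simp only [dExp]
    rw [Finset.sum_congr rfl fun σ _ => exp_dSum_sq_sigma n p σ, Finset.sum_add_distrib,
      mul_add, hE1 n (by omega) p]
    congr 1
    rw [Finset.sum_comm]
    rw [Finset.sum_congr rfl fun j (_ : j ∈ (univ : Finset (Fin n))) => Finset.sum_comm]
    rw [Finset.sum_congr rfl fun j _ => Finset.sum_congr rfl fun k _ => hclaim j k]
    simp_rw [← Finset.mul_sum]
    rw [← mul_assoc, inv_mul_cancel₀ hfac0, one_mul]
  rw [dVar, hE2, hE]
  have hA := expand4 n (fun j k r s => p j r * p k s)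
  have hG := expand4 n (fun j k r s => (p j r - p j s) * (p k r - p k s))
  rw [L1, L2] at hA
  rw [Gt, Gd1] at hG
  simp only [sub_self, zero_mul, Finset.sum_const_zero] at hG
  rw [hA, hG]
  have hS2' : ∑ j : Fin n, ((n:ℝ)⁻¹ * ∑ r : Fin n, p j r)^2
      = (n:ℝ)⁻¹ * ((n:ℝ)⁻¹ * ∑ j : Fin n, (∑ r : Fin n, p j r)^2) := by
    simp_rw [mul_pow, ← Finset.mul_sum]
    ring
  rw [hS2']
  field_simp
  ring
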